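/- Let s be any strategy profile of a Facility Location game with β_v > 0 for all nodes v, let I be a nonempty set of agents, and let s' be a profile with s'_j = s_j for all j ∉ I. Then Π_{j ∉ I} (c_j(s')/c_j(s))^{w_j} < e^{W(I)}, where W(I) = Σ_{i ∈ I} w_i and e is Euler's number. -/

import Mathlib

open Finset
open scoped Classical

/-- A Facility Location game: nodes `V`, agents `A`, connection costs `d`,
facility opening costs `β`, agent locations `u` and positive weights `w`. -/
structure FLGame (V A : Type*) [Fintype V] [Fintype A] where
  d : V → V → ℝ
  d_nonneg : ∀ x y, 0 ≤ d x y
  β : V → ℝ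
  β_nonneg : ∀ v, 0 ≤ β v
  u : A → V
  w : A → ℝ
  w_pos : ∀ i, 0 < w i
  V_nonempty : Nonempty V
  A_nonempty : Nonempty A

namespace FLGame

variable {V A : Type*} [Fintype V] [Fintype A]

/-- Total weight forwarded to node `v` under profile `s`. -/
noncomputable def Wmass (G : FLGame V A) (s : A → V) (v : V) : ℝ :=
  ∑ j, if s j = v then G.w j else 0

/-- Individual cost of agent `i` under profile `s`. -/
noncomputable def cost (G : FLGame V A) (s : A → V) (i : A) : ℝ :=
  G.w i * G.d (G.u i) (s i) + G.w i * G.β (s i) / G.Wmass s (s i)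

/-- Social cost of profile `s`. -/
noncomputable def social (G : FLGame V A) (s : A → V) : ℝ := ∑ i, G.cost s i

/-- All agents have unit weight. -/
def Unweighted (G : FLGame V A) : Prop := ∀ i, G.w i = 1

/-- `d` is a metric on `V`. -/
def Metric (G : FLGame V A) : Prop :=
  (∀ x, G.d x x = 0) ∧ (∀ x y, G.d x y = G.d y x) ∧ (∀ x y, 0 ≤ G.d x y) ∧
    (∀ x y z, G.d x z ≤ G.d x y + G.d y z)

/-- `s'` is obtained from `s` by a best-response move of agent `i`. -/
def BRMove (G : FLGame V A) (s s' : A → V) (i : A) : Prop :=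
  (∀ j, j ≠ i → s' j = s j) ∧ G.cost s' i < G.cost s i ∧
    (∀ s'' : A → V, (∀ j, j ≠ i → s'' j = s j) → G.cost s' i ≤ G.cost s'' i)

/-- `s` is reached from `s0` by iterative best response. -/
def ReachedByIBR (G : FLGame V A) (s0 s : A → V) : Prop :=
  ∃ (T : ℕ) (seq : ℕ → A → V), seq 0 = s0 ∧ seq T = s ∧
    ∀ t, t < T → ∃ i, G.BRMove (seq t) (seq (t + 1)) i

/-- `s` is a pure Nash equilibrium. -/
def IsPNE (G : FLGame V A) (s : A → V) : Prop :=
  ∀ (i : A) (v : V), G.cost s i ≤ G.cost (Function.update s i v) i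

/-- The nonempty coalition `I` deviates from `s` to `s'`, every member improving
by a factor strictly more than `α`. -/
def CoalDev (G : FLGame V A) (α : ℝ) (s s' : A → V) (I : Finset A) : Prop :=
  I.Nonempty ∧ (∀ j ∉ I, s' j = s j) ∧ ∀ i ∈ I, α * G.cost s' i < G.cost s i

/-- `s` is an `α`-approximate strong equilibrium. -/
def ApproxSE (G : FLGame V A) (α : ℝ) (s : A → V) : Prop :=
  ¬ ∃ (I : Finset A) (s' : A → V), G.CoalDev α s s' I

end FLGame

/-- For any profile `s` of a game with positive facility costs, any
nonempty coalition `I` and any profile `s'` agreeing with `s` outside `I`, the weighted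
damage satisfies `Π_{j ∉ I} (c_j(s')/c_j(s))^{w_j} < e^{W(I)}`. -/
theorem stmt10 {V A : Type*} [Fintype V] [Fintype A] (G : FLGame V A)
    (hβ : ∀ v, 0 < G.β v) (s s' : A → V) (I : Finset A) (hI : I.Nonempty)
    (hs' : ∀ j ∉ I, s' j = s j) :
    ∏ j ∈ Finset.univ \ I, (G.cost s' j / G.cost s j) ^ (G.w j) <
      Real.exp (∑ i ∈ I, G.w i) := by
  obtain ⟨i0, hi0⟩ := hI
  -- positivity of masses and costs
  have hmass : ∀ (t : A → V) (j : A), 0 < G.Wmass t (t j) := by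
    intro t j
    have h1 : G.w j ≤ G.Wmass t (t j) := by
      have := Finset.single_le_sum (f := fun k => if t k = t j then G.w k else 0)
        (fun k _ => by split
                       · exact (G.w_pos k).le
                       · exact le_rfl) (Finset.mem_univ j)
      simpa [FLGame.Wmass] using this
    exact lt_of_lt_of_le (G.w_pos j) h1
  have hcpos : ∀ (t : A → V) (j : A), 0 < G.cost t j := by
    intro t j
    unfold FLGame.cost
    have h1 : 0 ≤ G.w j * G.d (G.u j) (t j) :=
      mul_nonneg (G.w_pos j).le (G.d_nonneg _ _)
    have h2 : 0 < G.w j * G.β (t j) / G.Wmass t (t j) :=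
      div_pos (mul_pos (G.w_pos j) (hβ _)) (hmass t j)
    linarith
  -- fiberwise data
  set B : V → Finset A := fun v => (Finset.univ \ I).filter (fun j => s j = v) with hB
  set x : V → ℝ := fun v => ∑ i ∈ I.filter (fun i => s i = v), G.w i with hx
  set Wout : V → ℝ := fun v => ∑ j ∈ B v, G.w j with hWout
  have hxnonneg : ∀ v, 0 ≤ x v := fun v =>
    Finset.sum_nonneg fun i _ => (G.w_pos i).le
  have hWoutnonneg : ∀ v, 0 ≤ Wout v := fun v =>
    Finset.sum_nonneg fun i _ => (G.w_pos i).le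
  -- Wmass s v = x v + Wout v
  have hsplit : ∀ v, G.Wmass s v = x v + Wout v := by
    intro v
    have h1 : ∑ j ∈ Finset.univ \ I, (if s j = v then G.w j else 0)
        + ∑ j ∈ I, (if s j = v then G.w j else 0)
        = ∑ j, (if s j = v then G.w j else 0) :=
      Finset.sum_sdiff (Finset.subset_univ I)
    have h2 : ∑ j ∈ I, (if s j = v then G.w j else 0)
        = ∑ i ∈ I.filter (fun i => s i = v), G.w i := by
      rw [Finset.sum_filter]
    have h3 : ∑ j ∈ Finset.univ \ I, (if s j = v then G.w j else 0)
        = ∑ j ∈ B v, G.w j := by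
      rw [hB]; rw [Finset.sum_filter]
    unfold FLGame.Wmass
    rw [← h1, h2, h3, hx, hWout]; ring
  -- Wmass s' v ≥ Wout v
  have hmass' : ∀ v, Wout v ≤ G.Wmass s' v := by
    intro v
    have h3 : ∑ j ∈ B v, G.w j = ∑ j ∈ Finset.univ \ I, (if s' j = v then G.w j else 0) := by
      rw [hB, Finset.sum_filter]
      refine Finset.sum_congr rfl fun j hj => ?_
      rw [hs' j (Finset.mem_sdiff.mp hj).2]
    rw [hWout]
    dsimp only
    rw [h3]
    unfold FLGame.Wmass
    refine Finset.sum_le_sum_of_subset_of_nonneg (Finset.subset_univ _) fun k _ _ => ?_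
    split
    · exact (G.w_pos k).le
    · exact le_rfl
  -- per-node product bound
  have key : ∀ v : V, (∀ j ∈ B v, (0:ℝ) < (G.cost s' j / G.cost s j) ^ (G.w j)) ∧
      ∏ j ∈ B v, (G.cost s' j / G.cost s j) ^ (G.w j) ≤ Real.exp (x v) ∧
      (0 < x v → ∏ j ∈ B v, (G.cost s' j / G.cost s j) ^ (G.w j) < Real.exp (x v)) := by
    intro v
    have hfac : ∀ j ∈ B v, (0:ℝ) < (G.cost s' j / G.cost s j) ^ (G.w j) := by
      intro j _
      exact Real.rpow_pos_of_pos (div_pos (hcpos s' j) (hcpos s j)) _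
    refine ⟨hfac, ?_⟩
    rcases Finset.eq_empty_or_nonempty (B v) with hBe | hBne
    · rw [hBe]
      simp only [Finset.prod_empty]
      constructor
      · exact Real.one_le_exp (hxnonneg v)
      · intro hxpos
        calc (1:ℝ) = Real.exp 0 := Real.exp_zero.symm
        _ < Real.exp (x v) := Real.exp_lt_exp.mpr hxpos
    · have hWoutpos : 0 < Wout v := Finset.sum_pos (fun i _ => G.w_pos i) hBne
      -- per-agent ratio bound
      have hratio : ∀ j ∈ B v, G.cost s' j / G.cost s j ≤ (x v + Wout v) / Wout v := by
        intro j hj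
        obtain ⟨hjI, hjv⟩ := Finset.mem_filter.mp hj
        have hjI' : j ∉ I := (Finset.mem_sdiff.mp hjI).2
        have hs'j : s' j = s j := hs' j hjI'
        rw [div_le_div_iff₀ (hcpos s j) hWoutpos]
        set a := G.w j * G.d (G.u j) (s j) with ha
        set b := G.w j * G.β (s j) with hbb
        have hanon : 0 ≤ a := mul_nonneg (G.w_pos j).le (G.d_nonneg _ _)
        have hbpos : 0 < b := mul_pos (G.w_pos j) (hβ _)
        have hWv : G.Wmass s (s j) = x v + Wout v := by rw [hjv]; exact hsplit v
        have hW'ge : Wout v ≤ G.Wmass s' (s' j) := by rw [hs'j, hjv]; exact hmass' v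
        have hW'pos : 0 < G.Wmass s' (s' j) := lt_of_lt_of_le hWoutpos hW'ge
        have hcost' : G.cost s' j = a + b / G.Wmass s' (s' j) := by
          unfold FLGame.cost; rw [hs'j]
        have hcost : G.cost s j = a + b / (x v + Wout v) := by
          unfold FLGame.cost; rw [hWv]
        rw [hcost', hcost]
        have hWpos : 0 < x v + Wout v := by
          have := hxnonneg v; linarith
        have h1 : b / G.Wmass s' (s' j) * Wout v ≤ b := by
          rw [div_mul_eq_mul_div, div_le_iff₀ hW'pos]
          nlinarith
        have h2 : (x v + Wout v) * (a + b / (x v + Wout v)) = a * (x v + Wout v) + b := by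
          field_simp
        rw [h2]
        have h3 : a * Wout v ≤ a * (x v + Wout v) := by nlinarith [hxnonneg v]
        nlinarith
      have hWpos : 0 < x v + Wout v := by have := hxnonneg v; linarith
      have hbase : (0:ℝ) < (x v + Wout v) / Wout v := div_pos hWpos hWoutpos
      have step1 : ∏ j ∈ B v, (G.cost s' j / G.cost s j) ^ (G.w j)
          ≤ ∏ j ∈ B v, ((x v + Wout v) / Wout v) ^ (G.w j) := by
        refine Finset.prod_le_prod (fun j hj => (hfac j hj).le) (fun j hj => ?_)
        exact Real.rpow_le_rpow (div_pos (hcpos s' j) (hcpos s j)).le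
          (hratio j hj) (G.w_pos j).le
      have step2 : ∏ j ∈ B v, ((x v + Wout v) / Wout v) ^ (G.w j)
          = ((x v + Wout v) / Wout v) ^ (Wout v) := by
        rw [hWout]
        exact (Real.rpow_sum_of_pos hbase _ _).symm
      have hbase_eq : (x v + Wout v) / Wout v = x v / Wout v + 1 := by
        field_simp
      have step3le : ((x v + Wout v) / Wout v) ^ (Wout v) ≤ Real.exp (x v) := by
        have h4 : (x v + Wout v) / Wout v ≤ Real.exp (x v / Wout v) := by
          rw [hbase_eq]; linarith [Real.add_one_le_exp (x v / Wout v)]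
        calc ((x v + Wout v) / Wout v) ^ (Wout v)
            ≤ (Real.exp (x v / Wout v)) ^ (Wout v) :=
              Real.rpow_le_rpow hbase.le h4 hWoutpos.le
          _ = Real.exp (x v / Wout v * Wout v) := (Real.exp_mul _ _).symm
          _ = Real.exp (x v) := by rw [div_mul_cancel₀ _ (ne_of_gt hWoutpos)]
      constructor
      · exact le_trans step1 (by rw [step2]; exact step3le)
      · intro hxpos
        have h4 : (x v + Wout v) / Wout v < Real.exp (x v / Wout v) := by
          rw [hbase_eq]
          have hne : x v / Wout v ≠ 0 := ne_of_gt (div_pos hxpos hWoutpos)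
          linarith [Real.add_one_lt_exp hne]
        have step3 : ((x v + Wout v) / Wout v) ^ (Wout v) < Real.exp (x v) := by
          calc ((x v + Wout v) / Wout v) ^ (Wout v)
              < (Real.exp (x v / Wout v)) ^ (Wout v) :=
                Real.rpow_lt_rpow hbase.le h4 hWoutpos
            _ = Real.exp (x v / Wout v * Wout v) := (Real.exp_mul _ _).symm
            _ = Real.exp (x v) := by rw [div_mul_cancel₀ _ (ne_of_gt hWoutpos)]
        exact lt_of_le_of_lt (le_trans step1 (le_of_eq step2)) step3
  -- assemble
  have hfiber : ∏ v : V, ∏ j ∈ B v, (G.cost s' j / G.cost s j) ^ (G.w j)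
      = ∏ j ∈ Finset.univ \ I, (G.cost s' j / G.cost s j) ^ (G.w j) := by
    rw [hB]
    exact Finset.prod_fiberwise _ _ _
  have hxsum : ∑ v : V, x v = ∑ i ∈ I, G.w i := by
    rw [hx]
    exact Finset.sum_fiberwise _ _ _
  have hxstar : 0 < x (s i0) := by
    refine Finset.sum_pos (fun i _ => G.w_pos i) ⟨i0, ?_⟩
    exact Finset.mem_filter.mpr ⟨hi0, rfl⟩
  have main : ∏ v : V, ∏ j ∈ B v, (G.cost s' j / G.cost s j) ^ (G.w j)
      < ∏ v : V, Real.exp (x v) := by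
    refine Finset.prod_lt_prod (f := fun v => ∏ j ∈ B v, (G.cost s' j / G.cost s j) ^ (G.w j))
      (fun v _ => Finset.prod_pos fun j hj => (key v).1 j hj)
      (fun v _ => (key v).2.1) ⟨s i0, Finset.mem_univ _, (key (s i0)).2.2 hxstar⟩
  rw [← hfiber, ← hxsum, Real.exp_sum]
  exact main
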